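/- Let P = P((u_i)_{i=1}^m, μ) be a Hall polytope and for I ⊆ [m] let F_I = {α ∈ P : Σ_{i∈I} α_i = μ(A_I)} (with F_∅ = P). Then for any I, J ⊆ [m], F_I ∩ F_J ⊆ F_{I∩J}. -/
import Mathlib


open MeasureTheory

/-- The set `A_I = {x : ∃ i ∈ I, c(x,u_i) < ∞}` (the target space is identified with `Fin m`). -/
def hallSet {X : Type*} {m : ℕ} (c : X → Fin m → EReal) (I : Finset (Fin m)) : Set X :=
  {x | ∃ i ∈ I, c x i ≠ ⊤}

lemma hallSet_union {X : Type*} {m : ℕ} (c : X → Fin m → EReal) (I J : Finset (Fin m)) :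
    hallSet c (I ∪ J) = hallSet c I ∪ hallSet c J := by
  ext x
  simp only [hallSet, Set.mem_setOf_eq, Set.mem_union, Finset.mem_union]
  constructor
  · rintro ⟨i, hi | hi, h⟩
    · exact Or.inl ⟨i, hi, h⟩
    · exact Or.inr ⟨i, hi, h⟩
  · rintro (⟨i, hi, h⟩ | ⟨i, hi, h⟩)
    · exact ⟨i, Or.inl hi, h⟩
    · exact ⟨i, Or.inr hi, h⟩

lemma hallSet_inter_subset {X : Type*} {m : ℕ} (c : X → Fin m → EReal) (I J : Finset (Fin m)) :
    hallSet c (I ∩ J) ⊆ hallSet c I ∩ hallSet c J := by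
  rintro x ⟨i, hi, h⟩
  rw [Finset.mem_inter] at hi
  exact ⟨⟨i, hi.1, h⟩, ⟨i, hi.2, h⟩⟩

lemma hallSet_measurable {X : Type*} [MeasurableSpace X] {m : ℕ} (c : X → Fin m → EReal)
    (hA : ∀ i : Fin m, MeasurableSet {x | c x i ≠ ⊤}) (I : Finset (Fin m)) :
    MeasurableSet (hallSet c I) := by
  have : hallSet c I = ⋃ i ∈ I, {x | c x i ≠ ⊤} := by
    ext x; simp [hallSet]
  rw [this]
  exact MeasurableSet.biUnion I.countable_toSet fun i _ => hA i

/-- for the faces `F_I = {α ∈ P : Σ_{i∈I} α_i = μ(A_I)}` of the Hall polytope,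
`F_I ∩ F_J ⊆ F_{I∩J}`. -/
theorem hallPolytope_face_inter {X : Type*} [MeasurableSpace X] {m : ℕ}
    (c : X → Fin m → EReal) (hbot : ∀ x i, c x i ≠ ⊥)
    (hA : ∀ i : Fin m, MeasurableSet {x | c x i ≠ ⊤})
    (μ : Measure X) [IsProbabilityMeasure μ]
    (hsupp : μ {x | ∀ i, c x i = ⊤} = 0)
    (I J : Finset (Fin m)) (α : Fin m → ℝ)
    (hα0 : ∀ i, 0 ≤ α i) (hα1 : ∑ i, α i = 1)
    (hP : ∀ K : Finset (Fin m), ∑ i ∈ K, α i ≤ (μ (hallSet c K)).toReal)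
    (hI : ∑ i ∈ I, α i = (μ (hallSet c I)).toReal)
    (hJ : ∑ i ∈ J, α i = (μ (hallSet c J)).toReal) :
    ∑ i ∈ I ∩ J, α i = (μ (hallSet c (I ∩ J))).toReal := by
  have hfin : ∀ S : Set X, μ S ≠ ⊤ := fun S => measure_ne_top μ S
  -- inclusion-exclusion on measures
  have hIE : μ (hallSet c I ∪ hallSet c J) + μ (hallSet c I ∩ hallSet c J)
      = μ (hallSet c I) + μ (hallSet c J) :=
    measure_union_add_inter _ (hallSet_measurable c hA J)
  -- sums
  have hsum : ∑ i ∈ I ∪ J, α i + ∑ i ∈ I ∩ J, α i = ∑ i ∈ I, α i + ∑ i ∈ J, α i :=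
    Finset.sum_union_inter
  have hmono : μ (hallSet c (I ∩ J)) ≤ μ (hallSet c I ∩ hallSet c J) :=
    measure_mono (hallSet_inter_subset c I J)
  have hUeq : μ (hallSet c (I ∪ J)) = μ (hallSet c I ∪ hallSet c J) := by
    rw [hallSet_union]
  have hIEr : (μ (hallSet c I ∪ hallSet c J)).toReal + (μ (hallSet c I ∩ hallSet c J)).toReal
      = (μ (hallSet c I)).toReal + (μ (hallSet c J)).toReal := by
    rw [← ENNReal.toReal_add (hfin _) (hfin _), ← ENNReal.toReal_add (hfin _) (hfin _), hIE]
  have h1 : ∑ i ∈ I ∪ J, α i ≤ (μ (hallSet c (I ∪ J))).toReal := hP _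
  have h2 : ∑ i ∈ I ∩ J, α i ≤ (μ (hallSet c (I ∩ J))).toReal := hP _
  have hmr : (μ (hallSet c (I ∩ J))).toReal ≤ (μ (hallSet c I ∩ hallSet c J)).toReal :=
    ENNReal.toReal_mono (hfin _) hmono
  have h3 : (μ (hallSet c (I ∪ J))).toReal = (μ (hallSet c I ∪ hallSet c J)).toReal := by
    rw [hUeq]
  linarith
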